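/- Let m ≥ 0, let k ∈ ℂ with 0 < |k| < 1, and let λ ∈ ℂ satisfy λ² = m² + 2 − k − k⁻¹ (so that λ² ≠ m² and λ² ≠ m² + 4). Set B := ( |λ + m|² + |λ − m|² + 2|k| |λ² − m²| ) / ( |λ² − m²| · |λ² − m² − 4| ) and C := |k| / |λ² − m² − 4|. Then the squared spectral norm of T₀(k) is given exactly by |T₀(k)|² = (B + √(B² − 4C))/2. -/

import Mathlib

open scoped ComplexOrder
open Matrix

noncomputable section

abbrev Mat2 : Type := Matrix (Fin 2) (Fin 2) ℂ
abbrev Vec2 : Type := EuclideanSpace ℂ (Fin 2)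
abbrev Hsp : Type := lp (fun _ : ℤ => Vec2) 2

/-- A `2×2` complex matrix acting on `ℂ²` as a continuous linear map. -/
def mAct (A : Mat2) : Vec2 →L[ℂ] Vec2 := Matrix.toEuclideanCLM (𝕜 := ℂ) A

/-- The spectral (operator) norm of a `2×2` complex matrix. -/
def specNorm (A : Mat2) : ℝ := ‖mAct A‖

/-- The Hilbert–Schmidt (Frobenius) norm of a `2×2` complex matrix. -/
def hsNorm (A : Mat2) : ℝ := Real.sqrt (∑ i, ∑ j, ‖A i j‖ ^ 2)

def bMat (m : ℝ) : Mat2 := !![(-m : ℂ), 1; 1, (m : ℂ)]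

def aMat : Mat2 := !![0, 0; -1, 0]

/-- `D0` is the free discrete Dirac operator with mass `m`. -/
def IsFreeDirac (m : ℝ) (D0 : Hsp →L[ℂ] Hsp) : Prop :=
  ∀ u : Hsp, ∀ n : ℤ,
    (D0 u) n = mAct aMat.transpose (u (n - 1)) + mAct (bMat m) (u n) + mAct aMat (u (n + 1))

/-- `Vop` is the block-diagonal operator with blocks `υ n`. -/
def IsBlockDiagOp (υ : ℤ → Mat2) (Vop : Hsp →L[ℂ] Hsp) : Prop :=
  ∀ u : Hsp, ∀ n : ℤ, (Vop u) n = mAct (υ n) (u n)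

/-- The spectrum `[−√(m²+4), −m] ∪ [m, √(m²+4)]` as a subset of `ℂ`. -/
def sigma0 (m : ℝ) : Set ℂ :=
  Complex.ofReal '' (Set.Icc (-Real.sqrt (m ^ 2 + 4)) (-m) ∪ Set.Icc m (Real.sqrt (m ^ 2 + 4)))

def T0mat (m : ℝ) (lam k : ℂ) : Mat2 :=
  (k⁻¹ - k)⁻¹ • !![lam - m, 1 - k; 1 - k, lam + m]

def T1mat (m : ℝ) (lam k : ℂ) : Mat2 :=
  (k * (k⁻¹ - k)⁻¹) • !![lam - m, 1 - k; 1 - k⁻¹, lam + m]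

def Tmat (m : ℝ) (lam k : ℂ) : ℤ → Mat2 := fun j =>
  if j = 0 then T0mat m lam k
  else if 0 < j then k ^ (j.toNat - 1) • T1mat m lam k
  else (k ^ ((-j).toNat - 1) • T1mat m lam k).transpose

open scoped MatrixOrder

def wMat (υ : ℤ → Mat2) (n : ℤ) : Mat2 :=
  CFC.sqrt ((υ n)ᴴ * υ n)

def sqrtwMat (υ : ℤ → Mat2) (n : ℤ) : Mat2 :=
  CFC.sqrt (CFC.sqrt ((υ n)ᴴ * υ n))

/-- The Birman–Schwinger operator `K(z) = √W (D₀ − z)⁻¹ U √W`. -/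
def Kop (D0 sW Uop : Hsp →L[ℂ] Hsp) (z : ℂ) : Hsp →L[ℂ] Hsp :=
  sW * Ring.inverse (D0 - z • (1 : Hsp →L[ℂ] Hsp)) * Uop * sW

/-- The element of `ℓ²(ℤ, ℂ²)` supported at site `j` equal to the `β`-th standard basis vector. -/
def deltaVec (j : ℤ) (β : Fin 2) : Hsp := lp.single 2 j (EuclideanSpace.single β (1 : ℂ))



lemma conj_mul_self_eq (z : ℂ) : starRingEnd ℂ z * z = ((‖z‖ ^ 2 : ℝ) : ℂ) := by
  rw [mul_comm, Complex.mul_conj, Complex.sq_norm]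

lemma specNorm_sq_eq (A : Mat2) (τ δ : ℝ) (hτ0 : 0 ≤ τ) (hδ0 : 0 ≤ δ)
    (hdisc : 0 ≤ τ ^ 2 - 4 * δ)
    (hτ : ((τ : ℂ)) = (Aᴴ * A).trace)
    (hδ : ((δ : ℂ)) = (Aᴴ * A).det) :
    specNorm A ^ 2 = (τ + Real.sqrt (τ ^ 2 - 4 * δ)) / 2 := by
  set H : Mat2 := Aᴴ * A with hH
  set D : ℝ := Real.sqrt (τ ^ 2 - 4 * δ) with hD
  have hD0 : 0 ≤ D := Real.sqrt_nonneg _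
  have hDsq : D ^ 2 = τ ^ 2 - 4 * δ := Real.sq_sqrt hdisc
  have hDτ : D ≤ τ := by nlinarith [Real.sq_sqrt hdisc]
  set sp : ℝ := (τ + D) / 2 with hsp
  set sm : ℝ := (τ - D) / 2 with hsm
  have hsm0 : 0 ≤ sm := by rw [hsm]; linarith
  have hsmsp : sm ≤ sp := by rw [hsm, hsp]; linarith
  have hsumR : sm + sp = τ := by rw [hsm, hsp]; ring
  have hprodR : sm * sp = δ := by rw [hsm, hsp]; nlinarith [hDsq]
  have hsumC : (sm : ℂ) + (sp : ℂ) = (τ : ℂ) := by exact_mod_cast congrArg Complex.ofReal hsumR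
  have hprodC : (sm : ℂ) * (sp : ℂ) = (δ : ℂ) := by exact_mod_cast congrArg Complex.ofReal hprodR
  have hdet2 : ∀ z : ℂ, (algebraMap ℂ Mat2 z - H).det = (z - (sm : ℂ)) * (z - (sp : ℂ)) := by
    intro z
    have ht : H 0 0 + H 1 1 = (τ : ℂ) := by rw [hτ]; simp [Matrix.trace_fin_two]
    have hd : H 0 0 * H 1 1 - H 0 1 * H 1 0 = (δ : ℂ) := by rw [hδ]; simp [Matrix.det_fin_two]
    have h : (algebraMap ℂ Mat2 z - H).det = (z - H 0 0) * (z - H 1 1) - H 0 1 * H 1 0 := by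
      simp [Matrix.det_fin_two, Matrix.algebraMap_eq_diagonal]
    rw [h]
    linear_combination (-z) * ht + hd + z * hsumC - hprodC
  have hspec : spectrum ℂ H = {(sm : ℂ), (sp : ℂ)} := by
    ext z
    rw [spectrum.mem_iff, Matrix.isUnit_iff_isUnit_det, isUnit_iff_ne_zero, not_not, hdet2 z,
      mul_eq_zero, sub_eq_zero, sub_eq_zero]
    simp [Set.mem_insert_iff]
  have hstarH : star H = H := by
    rw [hH, Matrix.star_eq_conjTranspose, Matrix.conjTranspose_mul,
      Matrix.conjTranspose_conjTranspose]
  have hsa : IsSelfAdjoint (mAct H) := by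
    rw [_root_.IsSelfAdjoint, mAct, ← map_star, hstarH]
  have hspecS : spectrum ℂ (mAct H) = {(sm : ℂ), (sp : ℂ)} := by
    rw [mAct, AlgEquiv.spectrum_eq (Matrix.toEuclideanCLM (𝕜 := ℂ)) H, hspec]
  have h2 : spectralRadius ℂ (mAct H) = ‖mAct H‖₊ := hsa.spectralRadius_eq_nnnorm
  rw [spectralRadius, hspecS, iSup_pair] at h2
  have hnormH : ‖mAct H‖ = sp := by
    have hsp0 : 0 ≤ sp := hsm0.trans hsmsp
    have hle : (‖((sm : ℝ) : ℂ)‖₊ : ENNReal) ≤ (‖((sp : ℝ) : ℂ)‖₊ : ENNReal) := by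
      rw [ENNReal.coe_le_coe, ← NNReal.coe_le_coe]
      simp only [coe_nnnorm, Complex.norm_real, Real.norm_eq_abs]
      rw [abs_of_nonneg hsm0, abs_of_nonneg hsp0]; exact hsmsp
    rw [sup_eq_right.2 hle] at h2
    have h3 := congrArg ENNReal.toReal h2.symm
    simp only [ENNReal.coe_toReal, coe_nnnorm] at h3
    rw [h3, Complex.norm_real, Real.norm_eq_abs, abs_of_nonneg hsp0]
  have hsq : specNorm A ^ 2 = ‖mAct H‖ := by
    rw [specNorm, sq]
    have h4 : mAct H = star (mAct A) * mAct A := by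
      rw [hH]; simp only [mAct, _root_.map_mul, ← Matrix.star_eq_conjTranspose, map_star]
    rw [h4]
    have h5 := ContinuousLinearMap.norm_adjoint_comp_self (mAct A)
    simpa [ContinuousLinearMap.star_eq_adjoint, ContinuousLinearMap.mul_def] using h5.symm
  rw [hsq, hnormH, hsp]


set_option maxHeartbeats 1000000 in
/-- Exact formula for the squared spectral norm of `T₀(k)`. -/
theorem stmt10 (m : ℝ) (hm : 0 ≤ m) (k lam : ℂ)
    (hk0 : 0 < ‖k‖) (hk1 : ‖k‖ < 1)
    (hrel : lam ^ 2 = (m : ℂ) ^ 2 + 2 - k - k⁻¹)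
    (B C : ℝ)
    (hB : B = (‖lam + (m : ℂ)‖ ^ 2 + ‖lam - (m : ℂ)‖ ^ 2 +
          2 * ‖k‖ * ‖lam ^ 2 - (m : ℂ) ^ 2‖) /
        (‖lam ^ 2 - (m : ℂ) ^ 2‖ * ‖lam ^ 2 - (m : ℂ) ^ 2 - 4‖))
    (hC : C = ‖k‖ / ‖lam ^ 2 - (m : ℂ) ^ 2 - 4‖) :
    specNorm (T0mat m lam k) ^ 2 = (B + Real.sqrt (B ^ 2 - 4 * C)) / 2 := by
  have hk : k ≠ 0 := by
    intro h; rw [h] at hk0; simp at hk0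
  have h1k : (1 : ℂ) - k ≠ 0 := by
    intro h
    have hx : k = 1 := by linear_combination -h
    rw [hx] at hk1; simp at hk1
  have h2k : (1 : ℂ) + k ≠ 0 := by
    intro h
    have hx : k = -1 := by linear_combination h
    rw [hx] at hk1; simp at hk1
  set κ := ‖k‖ with hκdef
  set n1 := ‖1 - k‖ with hn1def
  set n2 := ‖1 + k‖ with hn2def
  have hn1 : 0 < n1 := by simpa [hn1def] using h1k
  have hn2 : 0 < n2 := by simpa [hn2def] using h2k
  set P := ‖lam - (m : ℂ)‖ ^ 2 with hPdef
  set R := ‖lam + (m : ℂ)‖ ^ 2 with hRdef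
  have hP0 : 0 ≤ P := sq_nonneg _
  have hR0 : 0 ≤ R := sq_nonneg _
  -- complex identities
  have hML : lam ^ 2 - (m : ℂ) ^ 2 = -((1 - k) ^ 2) / k := by
    rw [hrel]; field_simp; ring
  have hML4 : lam ^ 2 - (m : ℂ) ^ 2 - 4 = -((1 + k) ^ 2) / k := by
    rw [hrel]; field_simp; ring
  have hDet : (lam - m) * (lam + m) - (1 - k) ^ 2 = -((1 - k) ^ 2 * (1 + k)) / k := by
    have h : (lam - m) * (lam + m) = lam ^ 2 - (m : ℂ) ^ 2 := by ring
    rw [h, hML]; field_simp; ring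
  have hkinv0 : k⁻¹ - k = ((1 - k) * (1 + k)) / k := by field_simp; ring
  have hkinv : (k⁻¹ - k)⁻¹ = k / ((1 - k) * (1 + k)) := by rw [hkinv0, inv_div]
  -- abs identities
  have habsML : ‖lam ^ 2 - (m : ℂ) ^ 2‖ = n1 ^ 2 / κ := by
    rw [hML, norm_div, norm_neg, norm_pow]
  have habsML4 : ‖lam ^ 2 - (m : ℂ) ^ 2 - 4‖ = n2 ^ 2 / κ := by
    rw [hML4, norm_div, norm_neg, norm_pow]
  have habsc : ‖(k⁻¹ - k)⁻¹‖ = κ / (n1 * n2) := by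
    rw [hkinv, norm_div, norm_mul]
  -- P * R
  have hPR : P * R = (n1 ^ 2 / κ) ^ 2 := by
    rw [hPdef, hRdef, ← habsML]
    rw [← mul_pow, ← norm_mul]
    congr 2
    ring
  -- determinant of A
  set A := T0mat m lam k with hA
  have hAdet : A.det = ((k⁻¹ - k)⁻¹) ^ 2 * ((lam - m) * (lam + m) - (1 - k) ^ 2) := by
    rw [hA, T0mat]
    generalize (k⁻¹ - k)⁻¹ = c
    simp [Matrix.det_fin_two, Matrix.smul_apply]
    ring
  have habsdet : ‖A.det‖ = κ / n2 := by
    rw [hAdet, norm_mul, norm_pow, habsc, hDet, norm_div, norm_neg, norm_mul,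
      norm_pow]
    rw [← hκdef, ← hn1def, ← hn2def]
    field_simp
  -- C = |det A|^2
  have hC' : C = ‖A.det‖ ^ 2 := by
    rw [hC, habsML4, habsdet]
    field_simp
  -- B in terms of entries
  have hB' : B = (κ / (n1 * n2)) ^ 2 * (P + n1 ^ 2 + n1 ^ 2 + R) := by
    rw [hB, habsML, habsML4]
    field_simp
    ring
  -- trace identity
  have htrace : ((B : ℝ) : ℂ) = (Aᴴ * A).trace := by
    have htr : (Aᴴ * A).trace =
        (starRingEnd ℂ ((k⁻¹ - k)⁻¹) * (k⁻¹ - k)⁻¹) *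
          (starRingEnd ℂ (lam - m) * (lam - m) + starRingEnd ℂ (1 - k) * (1 - k)
            + starRingEnd ℂ (1 - k) * (1 - k) + starRingEnd ℂ (lam + m) * (lam + m)) := by
      rw [hA, T0mat]
      simp [Matrix.trace_fin_two, Matrix.mul_apply, Fin.sum_univ_two,
        Matrix.conjTranspose_apply]
      ring
    rw [htr, conj_mul_self_eq, conj_mul_self_eq, conj_mul_self_eq, conj_mul_self_eq, habsc,
      ← hPdef, ← hRdef, ← hn1def]
    rw [hB']
    push_cast
    ring
  -- det identity
  have hdet : ((C : ℝ) : ℂ) = (Aᴴ * A).det := by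
    rw [Matrix.det_mul, Matrix.det_conjTranspose, hC']
    have : star A.det * A.det = ((‖A.det‖ ^ 2 : ℝ) : ℂ) := conj_mul_self_eq A.det
    rw [this]
  -- positivity
  have hB0 : 0 ≤ B := by
    rw [hB']
    positivity
  have hC0 : 0 ≤ C := by
    rw [hC']
    positivity
  -- discriminant
  have hn2le : n2 ≤ 1 + κ := by
    rw [hn2def, hκdef]
    calc ‖1 + k‖ ≤ ‖1‖ + ‖k‖ := norm_add_le 1 k
    _ = 1 + ‖k‖ := by simp
  have hsumPR : 2 * (n1 ^ 2 / κ) ≤ P + R := by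
    nlinarith [sq_nonneg (P - R), hPR, hP0, hR0, sq_nonneg (P + R - 2 * (n1 ^ 2 / κ)),
      div_nonneg (sq_nonneg n1) hk0.le]
  have hdisc : 0 ≤ B ^ 2 - 4 * C := by
    have hsum2 : 2 * n1 ^ 2 ≤ κ * (P + R) := by
      have h := mul_le_mul_of_nonneg_left hsumPR hk0.le
      have he : κ * (2 * (n1 ^ 2 / κ)) = 2 * n1 ^ 2 := by field_simp
      rw [he] at h
      exact h
    have h2 : 2 * n1 ^ 2 * n2 ≤ κ * (P + n1 ^ 2 + n1 ^ 2 + R) := by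
      nlinarith [hsum2, mul_le_mul_of_nonneg_left hn2le (show (0:ℝ) ≤ 2 * n1 ^ 2 by positivity),
        hk0.le, hn1.le]
    have h3 : (2 * n1 ^ 2 * n2) ^ 2 ≤ (κ * (P + n1 ^ 2 + n1 ^ 2 + R)) ^ 2 :=
      pow_le_pow_left₀ (by positivity) h2 2
    have hBeq : B = κ ^ 2 * (P + n1 ^ 2 + n1 ^ 2 + R) / (n1 ^ 2 * n2 ^ 2) := by
      rw [hB', div_pow]; ring
    have hCeq : C = κ ^ 2 / n2 ^ 2 := by
      rw [hC', habsdet, div_pow]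
    rw [sub_nonneg, hBeq, hCeq, div_pow,
      show (4:ℝ) * (κ ^ 2 / n2 ^ 2) = 4 * κ ^ 2 / n2 ^ 2 from by ring,
      div_le_div_iff₀ (by positivity) (by positivity)]
    nlinarith [mul_le_mul_of_nonneg_left h3 (show (0:ℝ) ≤ κ ^ 2 * n2 ^ 2 by positivity)]
  have := specNorm_sq_eq A B C hB0 hC0 hdisc htrace hdet
  rw [this]
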